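/- Let 0 < θ < 1, p > 0, x > 0 and y > 0. For all t ∈ [0,1], one has 0 ≤ x²t/(x²t + θy²(1−t)) − θx²t/(θx²t + y²(1−t)) ≤ (1 − θ)/(1 + θ), with equality on the right attained at t = y²/(x² + y²). -/

import Mathlib

/-- for 0 < θ < 1, p > 0, x, y > 0 and t ∈ [0,1],
0 ≤ x²t/(x²t + θy²(1−t)) − θx²t/(θx²t + y²(1−t)) ≤ (1−θ)/(1+θ), with equality on the right
at t = y²/(x² + y²). -/
theorem stmt_19 (θ p x y : ℝ) (hθ0 : 0 < θ) (hθ1 : θ < 1) (hp : 0 < p)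
    (hx : 0 < x) (hy : 0 < y) :
    (∀ t : ℝ, 0 ≤ t → t ≤ 1 →
      0 ≤ x ^ 2 * t / (x ^ 2 * t + θ * y ^ 2 * (1 - t)) -
          θ * x ^ 2 * t / (θ * x ^ 2 * t + y ^ 2 * (1 - t)) ∧
      x ^ 2 * t / (x ^ 2 * t + θ * y ^ 2 * (1 - t)) -
          θ * x ^ 2 * t / (θ * x ^ 2 * t + y ^ 2 * (1 - t)) ≤ (1 - θ) / (1 + θ)) ∧
    x ^ 2 * (y ^ 2 / (x ^ 2 + y ^ 2)) /
          (x ^ 2 * (y ^ 2 / (x ^ 2 + y ^ 2)) + θ * y ^ 2 * (1 - y ^ 2 / (x ^ 2 + y ^ 2))) -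
        θ * x ^ 2 * (y ^ 2 / (x ^ 2 + y ^ 2)) /
          (θ * x ^ 2 * (y ^ 2 / (x ^ 2 + y ^ 2)) + y ^ 2 * (1 - y ^ 2 / (x ^ 2 + y ^ 2)))
      = (1 - θ) / (1 + θ) := by
  have hx2 : 0 < x ^ 2 := by positivity
  have hy2 : 0 < y ^ 2 := by positivity
  constructor
  · intro t ht0 ht1
    have hq : 0 ≤ x ^ 2 * t * (y ^ 2 * (1 - t)) :=
      mul_nonneg (mul_nonneg hx2.le ht0) (mul_nonneg hy2.le (by linarith))
    have hd1 : 0 < x ^ 2 * t + θ * y ^ 2 * (1 - t) := by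
      rcases eq_or_lt_of_le ht0 with h | h
      · rw [← h]; nlinarith
      · nlinarith [mul_pos hx2 h, mul_nonneg (mul_nonneg hθ0.le hy2.le) (by linarith : (0:ℝ) ≤ 1 - t)]
    have hd2 : 0 < θ * x ^ 2 * t + y ^ 2 * (1 - t) := by
      rcases eq_or_lt_of_le ht0 with h | h
      · rw [← h]; nlinarith
      · nlinarith [mul_pos (mul_pos hθ0 hx2) h, mul_nonneg hy2.le (by linarith : (0:ℝ) ≤ 1 - t)]
    constructor
    · rw [div_sub_div _ _ (ne_of_gt hd1) (ne_of_gt hd2), le_div_iff₀ (by positivity)]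
      nlinarith [mul_nonneg hq (by nlinarith : (0:ℝ) ≤ 1 - θ ^ 2)]
    · rw [div_sub_div _ _ (ne_of_gt hd1) (ne_of_gt hd2), div_le_div_iff₀ (by positivity) (by linarith)]
      nlinarith [mul_nonneg (mul_nonneg (by linarith : (0:ℝ) ≤ 1 - θ) hθ0.le)
        (sq_nonneg (x ^ 2 * t - y ^ 2 * (1 - t)))]
  · have hxy : (0:ℝ) < x ^ 2 + y ^ 2 := by positivity
    have h1 : 1 - y ^ 2 / (x ^ 2 + y ^ 2) = x ^ 2 / (x ^ 2 + y ^ 2) := by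
      field_simp
      ring
    rw [h1]
    have hθ' : (0:ℝ) < 1 + θ := by linarith
    field_simp
    ring
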